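/- Let n, r ∈ ℕ with n ≥ r and r dividing n. Let G be a K_{r+1}-free graph on n vertices whose degree sequence d_1 ≤ ⋯ ≤ d_n satisfies d_{n/r} ≥ (r−1)n/r. Then G is a subgraph of the Turán graph T(n,r); that is, the vertex set of G can be partitioned into r independent sets each of size exactly n/r. -/

import Mathlib

/-- The degree of a vertex. -/
noncomputable def deg {V : Type*} (G : SimpleGraph V) (v : V) : ℕ := Nat.card (G.neighborSet v)

/-- Let `n ≥ r` with `r ∣ n`, and let `G` be a `K_{r+1}`-free graph on `n` vertices whose
nondecreasing degree sequence `d` (realised via a permutation `σ` of the vertices) satisfies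
`d_{n/r} ≥ (r-1)n/r`. Then `G ⊆ T(n,r)`: its vertex set can be partitioned into `r`
independent sets, each of size exactly `n/r`. -/
theorem stmt3 (n r : ℕ) (hr : 1 ≤ r) (hrn : r ≤ n) (hdvd : r ∣ n)
    (G : SimpleGraph (Fin n)) (hfree : G.CliqueFree (r + 1))
    (d : Fin n → ℕ) (σ : Equiv.Perm (Fin n))
    (hmono : Monotone d) (hdeg : ∀ i, d i = deg G (σ i))
    (hcond : ∀ i : Fin n, (i : ℕ) + 1 = n / r → (r - 1) * (n / r) ≤ d i) :
    ∃ W : Fin r → Finset (Fin n),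
      (∀ i, (W i).card = n / r) ∧
      (∀ i, ∀ x ∈ W i, ∀ y ∈ W i, ¬ G.Adj x y) ∧
      (∀ i j, i ≠ j → Disjoint (W i) (W j)) ∧
      Finset.univ.biUnion W = Finset.univ := by
  classical
  obtain ⟨k, hk⟩ := hdvd
  have hkdiv : n / r = k := by subst hk; exact Nat.mul_div_cancel_left k (by omega)
  have hk1 : 1 ≤ k := by
    rcases Nat.eq_zero_or_pos k with h | h
    · subst h; omega
    · exact h
  have hkn : k ≤ n := by subst hk; nlinarith
  -- degree as a filter cardinality
  have hdegcard : ∀ v, deg G v = (Finset.univ.filter (G.Adj v ·)).card := by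
    intro v
    rw [deg, Nat.card_eq_fintype_card]
    simp [SimpleGraph.neighborSet, Fintype.card_subtype]
    exact Fintype.card_ofFinset _ _
  -- non-neighborhood (including the vertex itself)
  set NW : Fin n → Finset (Fin n) := fun v => Finset.univ.filter (fun x => ¬ G.Adj v x) with hNW
  have hNWcard : ∀ v, (NW v).card = n - deg G v := by
    intro v
    rw [hdegcard]
    simp only [hNW, Finset.filter_not]
    rw [Finset.card_sdiff_of_subset (Finset.filter_subset _ _)]
    simp
  -- the set of high-degree vertices
  set S : Finset (Fin n) := Finset.univ.filter (fun v => n - k ≤ deg G v) with hS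
  have hNWS : ∀ v ∈ S, (NW v).card ≤ k := by
    intro v hv
    rw [hS, Finset.mem_filter] at hv
    rw [hNWcard]
    omega
  -- lower bound on |S|
  have hScard : n - k + 1 ≤ S.card := by
    have hkm1 : k - 1 < n := by omega
    set i₀ : Fin n := ⟨k - 1, hkm1⟩ with hi₀
    have hd₀ : n - k ≤ d i₀ := by
      have := hcond i₀ (by simp [hi₀, hkdiv]; omega)
      rw [hkdiv] at this
      have h2 : (r - 1) * k = r * k - k := by
        rw [Nat.sub_mul, one_mul]
      omega
    have hsub : (Finset.Ici i₀).image σ ⊆ S := by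
      intro x hx
      rw [Finset.mem_image] at hx
      obtain ⟨i, hi, rfl⟩ := hx
      rw [Finset.mem_Ici] at hi
      rw [hS, Finset.mem_filter]
      refine ⟨Finset.mem_univ _, ?_⟩
      rw [← hdeg]
      exact le_trans hd₀ (hmono hi)
    calc n - k + 1 = n - (k - 1) := by omega
    _ = (Finset.Ici i₀).card := by rw [Fin.card_Ici]
    _ = ((Finset.Ici i₀).image σ).card := (Finset.card_image_of_injective _ σ.injective).symm
    _ ≤ S.card := Finset.card_le_card hsub
  -- build an r-clique inside S
  have clique : ∀ j, j ≤ r → ∃ C : Finset (Fin n), C ⊆ S ∧ G.IsClique C ∧ C.card = j := by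
    intro j
    induction j with
    | zero => exact fun _ => ⟨∅, by simp, by simp, rfl⟩
    | succ j ih =>
      intro hj
      obtain ⟨C, hCS, hCcl, hCcard⟩ := ih (by omega)
      have hbU : (C.biUnion NW).card ≤ j * k := by
        refine le_trans Finset.card_biUnion_le ?_
        calc ∑ v ∈ C, (NW v).card ≤ ∑ _v ∈ C, k :=
          Finset.sum_le_sum (fun v hv => hNWS v (hCS hv))
        _ = j * k := by rw [Finset.sum_const, hCcard, smul_eq_mul]
      have hT : (S \ C.biUnion NW).Nonempty := by
        rw [← Finset.card_pos]
        have h1 : S.card - (C.biUnion NW).card ≤ (S \ C.biUnion NW).card :=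
          Finset.le_card_sdiff _ _
        have h2 : j * k ≤ (r - 1) * k := Nat.mul_le_mul_right k (by omega)
        have h3 : (r - 1) * k = r * k - k := by rw [Nat.sub_mul, one_mul]
        have hlt : (C.biUnion NW).card < S.card := by
          calc (C.biUnion NW).card ≤ j * k := hbU
          _ ≤ (r - 1) * k := h2
          _ = n - k := by rw [h3, ← hk]
          _ < n - k + 1 := Nat.lt_succ_self _
          _ ≤ S.card := hScard
        exact lt_of_lt_of_le (Nat.sub_pos_of_lt hlt) h1
      obtain ⟨u, hu⟩ := hT
      rw [Finset.mem_sdiff] at hu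
      have hadj : ∀ v ∈ C, G.Adj v u := by
        intro v hv
        by_contra h
        exact hu.2 (Finset.mem_biUnion.mpr ⟨v, hv, by simp [hNW, h]⟩)
      have huC : u ∉ C := fun h => (G.loopless.irrefl u) (hadj u h)
      refine ⟨insert u C, ?_, ?_, ?_⟩
      · intro x hx
        rcases Finset.mem_insert.mp hx with rfl | hx
        · exact hu.1
        · exact hCS hx
      · rw [Finset.coe_insert]
        exact hCcl.insert (fun b hb _ => (hadj b (Finset.mem_coe.mp hb)).symm)
      · rw [Finset.card_insert_of_notMem huC, hCcard]
  obtain ⟨C, hCS, hCcl, hCcard⟩ := clique r le_rfl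
  -- enumerate the clique
  have e : C ≃ Fin r := C.equivFinOfCardEq hCcard
  set v : Fin r → Fin n := fun i => (e.symm i : Fin n) with hv
  have hvC : ∀ i, v i ∈ C := fun i => (e.symm i).2
  have hvinj : Function.Injective v := fun i j h =>
    e.symm.injective (Subtype.ext h)
  have hvsurj : ∀ b ∈ C, ∃ i, v i = b := fun b hb => ⟨e ⟨b, hb⟩, by simp [hv]⟩
  have hvadj : ∀ i j, i ≠ j → G.Adj (v i) (v j) := fun i j hij =>
    hCcl (hvC i) (hvC j) (fun h => hij (hvinj h))
  set W : Fin r → Finset (Fin n) := fun i => NW (v i) with hW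
  have hmemW : ∀ i x, x ∈ W i ↔ ¬ G.Adj (v i) x := by
    intro i x; simp [hW, hNW]
  -- the W i cover everything
  have hcover : ∀ x : Fin n, ∃ i, x ∈ W i := by
    intro x
    by_contra h
    push_neg at h
    have hadj : ∀ i, G.Adj (v i) x := by
      intro i
      have := h i
      rw [hmemW] at this
      exact not_not.mp this
    have hxC : x ∉ C := by
      intro hx
      obtain ⟨i, hi⟩ := hvsurj x hx
      exact G.loopless.irrefl x (hi ▸ hadj i)
    have hclq : G.IsNClique (r + 1) (insert x C) := by
      constructor
      · rw [Finset.coe_insert]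
        refine hCcl.insert (fun b hb hbx => ?_)
        obtain ⟨i, rfl⟩ := hvsurj b (Finset.mem_coe.mp hb)
        exact (hadj i).symm
      · rw [Finset.card_insert_of_notMem hxC, hCcard]
    exact hfree _ hclq
  -- counting
  set f : Fin n → ℕ := fun x => (Finset.univ.filter (fun i : Fin r => x ∈ W i)).card with hf
  have hf1 : ∀ x, 1 ≤ f x := by
    intro x
    obtain ⟨i, hi⟩ := hcover x
    rw [hf]
    exact Finset.card_pos.mpr ⟨i, Finset.mem_filter.mpr ⟨Finset.mem_univ _, hi⟩⟩
  have hsumeq : ∑ i, (W i).card = ∑ x, f x := by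
    have h1 : ∀ i, (W i).card = ∑ x : Fin n, if x ∈ W i then 1 else 0 := by
      intro i
      rw [← Finset.card_filter]
      congr 1
      ext x
      simp
    have h2 : ∀ x, f x = ∑ i : Fin r, if x ∈ W i then 1 else 0 := fun x =>
      Finset.card_filter _ _
    simp only [h1, h2]
    exact Finset.sum_comm
  have hWle : ∀ i, (W i).card ≤ k := fun i => hNWS _ (hCS (hvC i))
  have hle : ∑ i, (W i).card ≤ r * k := by
    calc ∑ i, (W i).card ≤ ∑ _i : Fin r, k := Finset.sum_le_sum (fun i _ => hWle i)
    _ = r * k := by simp [Finset.sum_const, Finset.card_univ]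
  have hge : n ≤ ∑ x, f x := by
    calc n = ∑ _x : Fin n, 1 := by simp
    _ ≤ ∑ x, f x := Finset.sum_le_sum (fun x _ => hf1 x)
  have hsumf : ∑ x, f x = n := by omega
  have hsumW : ∑ i, (W i).card = n := by omega
  have hfeq1 : ∀ x, f x = 1 := by
    intro x
    by_contra h
    have h2 : 1 < f x := lt_of_le_of_ne (hf1 x) (Ne.symm h)
    have hlt : ∑ _x : Fin n, 1 < ∑ x, f x :=
      Finset.sum_lt_sum (fun y _ => hf1 y) ⟨x, Finset.mem_univ _, h2⟩
    rw [hsumf, Finset.sum_const, smul_eq_mul, mul_one, Finset.card_univ,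
      Fintype.card_fin] at hlt
    exact lt_irrefl n hlt
  have hdisj : ∀ i j, i ≠ j → Disjoint (W i) (W j) := by
    intro i j hij
    rw [Finset.disjoint_left]
    intro x hxi hxj
    have hsub : ({i, j} : Finset (Fin r)) ⊆ Finset.univ.filter (fun i => x ∈ W i) := by
      intro a ha
      rcases Finset.mem_insert.mp ha with rfl | ha
      · exact Finset.mem_filter.mpr ⟨Finset.mem_univ _, hxi⟩
      · rw [Finset.mem_singleton] at ha
        subst ha
        exact Finset.mem_filter.mpr ⟨Finset.mem_univ _, hxj⟩
    have h2 : 2 ≤ f x := by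
      have := Finset.card_le_card hsub
      rwa [Finset.card_pair hij] at this
    have := hfeq1 x
    omega
  have hWcard : ∀ i, (W i).card = k := by
    intro i
    by_contra h
    have hlt : (W i).card < k := lt_of_le_of_ne (hWle i) h
    have : ∑ i, (W i).card < ∑ _i : Fin r, k := by
      refine Finset.sum_lt_sum (fun j _ => hWle j) ⟨i, Finset.mem_univ _, hlt⟩
    rw [Finset.sum_const, Finset.card_univ, Fintype.card_fin, smul_eq_mul] at this
    omega
  -- independence of each W i
  have hind : ∀ i, ∀ x ∈ W i, ∀ y ∈ W i, ¬ G.Adj x y := by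
    intro i x hx y hy hxy
    have hxvi : x ≠ v i := by
      rintro rfl
      exact (hmemW i y).mp hy hxy
    have hyvi : y ≠ v i := by
      rintro rfl
      exact (hmemW i x).mp hx hxy.symm
    have hadjx : ∀ j, j ≠ i → G.Adj (v j) x := by
      intro j hj
      by_contra h
      exact (Finset.disjoint_left.mp (hdisj j i hj)) ((hmemW j x).mpr h) hx
    have hadjy : ∀ j, j ≠ i → G.Adj (v j) y := by
      intro j hj
      by_contra h
      exact (Finset.disjoint_left.mp (hdisj j i hj)) ((hmemW j y).mpr h) hy
    have hxC : x ∉ C := by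
      intro hxc
      obtain ⟨j, rfl⟩ := hvsurj x hxc
      have hji : j ≠ i := fun h => hxvi (by rw [h])
      exact (hmemW j (v j)).mpr (G.loopless.irrefl _) |> fun hm =>
        (Finset.disjoint_left.mp (hdisj j i hji)) hm hx
    have hyC : y ∉ C := by
      intro hyc
      obtain ⟨j, rfl⟩ := hvsurj y hyc
      have hji : j ≠ i := fun h => hyvi (by rw [h])
      exact (hmemW j (v j)).mpr (G.loopless.irrefl _) |> fun hm =>
        (Finset.disjoint_left.mp (hdisj j i hji)) hm hy
    have hxy' : x ≠ y := G.ne_of_adj hxy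
    set D : Finset (Fin n) := C.erase (v i) with hD
    have hDadjx : ∀ b ∈ D, G.Adj x b := by
      intro b hb
      obtain ⟨j, rfl⟩ := hvsurj b (Finset.mem_of_mem_erase hb)
      have hji : j ≠ i := by
        intro h; subst h
        exact Finset.ne_of_mem_erase hb rfl
      exact (hadjx j hji).symm
    have hDadjy : ∀ b ∈ D, G.Adj y b := by
      intro b hb
      obtain ⟨j, rfl⟩ := hvsurj b (Finset.mem_of_mem_erase hb)
      have hji : j ≠ i := by
        intro h; subst h
        exact Finset.ne_of_mem_erase hb rfl
      exact (hadjy j hji).symm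
    have hclq : G.IsNClique (r + 1) (insert x (insert y D)) := by
      constructor
      · have hDcl : G.IsClique (D : Set (Fin n)) :=
          hCcl.subset (by intro z hz; exact Finset.mem_of_mem_erase hz)
        have h1 : G.IsClique (insert y D : Finset (Fin n)) := by
          rw [Finset.coe_insert]
          exact hDcl.insert (fun b hb _ => hDadjy b hb)
        rw [Finset.coe_insert]
        refine h1.insert (fun b hb _ => ?_)
        rcases Finset.mem_insert.mp hb with rfl | hb
        · exact hxy
        · exact hDadjx b hb
      · have hyD : y ∉ D := fun h => hyC (Finset.mem_of_mem_erase h)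
        have hxD : x ∉ insert y D := by
          rw [Finset.mem_insert]
          rintro (rfl | h)
          · exact hxy' rfl
          · exact hxC (Finset.mem_of_mem_erase h)
        rw [Finset.card_insert_of_notMem hxD, Finset.card_insert_of_notMem hyD,
          hD, Finset.card_erase_of_mem (hvC i), hCcard]
        omega
    exact hfree _ hclq
  refine ⟨W, ?_, hind, hdisj, ?_⟩
  · intro i; rw [hkdiv]; exact hWcard i
  · apply Finset.eq_univ_of_forall
    intro x
    obtain ⟨i, hi⟩ := hcover x
    exact Finset.mem_biUnion.mpr ⟨i, Finset.mem_univ _, hi⟩
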